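/- Let k < n be positive integers. If G=(V,E) is a graph on n vertices containing at least one edge between any two disjoint vertex subsets S, T ⊂ V with |S| = |T| = k, then G contains a path of length at least n − 2k + 1 (measured in edges). -/

import Mathlib

open SimpleGraph

universe u

section Helpers

variable {V : Type u}

/-- A walk in `G` whose support lies in `s` yields reachability in the induced graph. -/
lemma reach_induce (G : SimpleGraph V) (s : Set V) :
    ∀ {x y : V} (p : G.Walk x y), (∀ z ∈ p.support, z ∈ s) →
      ∀ (hx : x ∈ s) (hy : y ∈ s), (G.induce s).Reachable ⟨x, hx⟩ ⟨y, hy⟩ := by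
  intro x y p
  induction p with
  | nil =>
      intro _ hx hy
      exact Reachable.refl _
  | @cons x m y h q ih =>
      intro hsupp hx hy
      have hm : m ∈ s := hsupp m (by simp [SimpleGraph.Walk.support_cons])
      have hstep : (G.induce s).Adj ⟨x, hx⟩ ⟨m, hm⟩ := by
        simp only [comap_adj, Function.Embedding.coe_subtype]
        exact h
      exact hstep.reachable.trans
        (ih (fun z hz => hsupp z (by simp [SimpleGraph.Walk.support_cons, hz])) hm hy)

/-- From a walk ending at `v` starting elsewhere, we find a neighbour `u` of `v`
reachable from the start inside `G - v`. -/
lemma toward (G : SimpleGraph V) (v : V) :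
    ∀ {x : V} (_ : G.Walk x v) (hx : x ≠ v),
      ∃ (u : V) (hu : u ≠ v), G.Adj u v ∧
        (G.induce {z | z ≠ v}).Reachable ⟨x, hx⟩ ⟨u, hu⟩ := by
  intro x p
  induction p with
  | nil => intro hx; exact absurd rfl hx
  | @cons x m v h q ih =>
      intro hx
      by_cases hm : m = v
      · subst hm
        exact ⟨x, hx, h, Reachable.refl _⟩
      · obtain ⟨u, hu, hadj, hr⟩ := ih hm
        have hstep : (G.induce {z | z ≠ v}).Adj ⟨x, hx⟩ ⟨m, hm⟩ := by
          simp only [comap_adj, Function.Embedding.coe_subtype]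
          exact h
        exact ⟨u, hu, hadj, hstep.reachable.trans hr⟩

/-- The cone over a graph: a new vertex `none` adjacent to everything. -/
def cone (G : SimpleGraph V) : SimpleGraph (Option V) where
  Adj x y :=
    match x, y with
    | none, none => False
    | none, some _ => True
    | some _, none => True
    | some a, some b => G.Adj a b
  symm := by
    refine ⟨fun x y h => ?_⟩
    cases x <;> cases y <;> simp_all
    exact h.symm
  loopless := by
    refine ⟨fun x h => ?_⟩
    cases x with
    | none => exact h
    | some a => exact G.loopless.irrefl a h

lemma cone_adj_some {G : SimpleGraph V} {a b : V} :
    (cone G).Adj (some a) (some b) ↔ G.Adj a b := Iff.rfl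

lemma cone_adj_none {G : SimpleGraph V} {a : V} : (cone G).Adj (some a) none := by
  show True
  trivial

/-- Descend a walk in the cone avoiding `none` to a walk in `G`. -/
lemma walk_down {G : SimpleGraph V} :
    ∀ {x y : Option V} (p : (cone G).Walk x y), (∀ z ∈ p.support, z ≠ none) →
      ∃ (a b : V) (q : G.Walk a b), x = some a ∧ y = some b ∧
        q.length = p.length ∧ p.support = q.support.map some := by
  intro x y p
  induction p with
  | @nil x =>
      intro h
      have hx : x ≠ none := h x (by simp)
      obtain ⟨a, rfl⟩ := Option.ne_none_iff_exists'.mp hx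
      exact ⟨a, a, SimpleGraph.Walk.nil, rfl, rfl, rfl, rfl⟩
  | @cons x m y h q ih =>
      intro hsupp
      have hx : x ≠ none := hsupp x (by simp)
      obtain ⟨a, rfl⟩ := Option.ne_none_iff_exists'.mp hx
      obtain ⟨c, b, q', hc, hb, hlen, hsup⟩ :=
        ih (fun z hz => hsupp z (by simp [SimpleGraph.Walk.support_cons, hz]))
      subst hc; subst hb
      have hadj : G.Adj a c := h
      refine ⟨a, b, SimpleGraph.Walk.cons hadj q', rfl, rfl, ?_, ?_⟩
      · simp [SimpleGraph.Walk.length_cons, hlen]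
      · simp [SimpleGraph.Walk.support_cons, hsup]

end Helpers

/-- Core lemma: in a connected graph, from any vertex `v`, assuming the cross-edge
property for disjoint sets of sizes `a`, `b` avoiding `v`, there is a path
from `v` of length at least `card V - a - b + 1`. -/
lemma core_path (N : ℕ) :
    ∀ (V : Type u) [Fintype V] [DecidableEq V] (G : SimpleGraph V) (v : V),
      Fintype.card V = N → ∀ a b : ℕ, 1 ≤ a → 1 ≤ b →
      (∀ S T : Finset V, Disjoint S T → v ∉ S → v ∉ T → S.card = a → T.card = b →
        ∃ s ∈ S, ∃ t ∈ T, G.Adj s t) →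
      G.Connected →
      ∃ (w : V) (p : G.Walk v w), p.IsPath ∧ N + 1 ≤ p.length + a + b := by
  induction N using Nat.strong_induction_on with
  | _ N IH =>
  intro V _ _ G v hcard a b ha hb hcut hconn
  classical
  by_cases htriv : N + 1 ≤ a + b
  · refine ⟨v, SimpleGraph.Walk.nil, SimpleGraph.Walk.IsPath.nil, ?_⟩
    simpa using htriv
  push_neg at htriv
  have hN2 : 2 ≤ N := by omega
  -- the graph on V \ {v}
  set sV : Set V := {z | z ≠ v} with hsV
  set Gv : SimpleGraph sV := G.induce sV with hGv
  have hcardVv : Fintype.card sV = N - 1 := by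
    have h1 : Fintype.card sV = Fintype.card {z : V // ¬ z = v} := Fintype.card_congr
      (Equiv.subtypeEquivRight (fun z => Iff.rfl))
    rw [h1, Fintype.card_subtype_compl, Fintype.card_subtype_eq, hcard]
  have hVvne : Nonempty sV := by
    rw [← Fintype.card_pos_iff, hcardVv]; omega
  by_cases hpre : Gv.Preconnected
  · -- G - v is connected; find a neighbour u of v and recurse inside G - v.
    obtain ⟨z0⟩ := id hVvne
    have hzv : (z0 : V) ≠ v := z0.2
    obtain ⟨pw⟩ := hconn (z0 : V) v
    obtain ⟨u, hu, hadj, _⟩ := toward G v pw hzv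
    set u' : sV := ⟨u, hu⟩ with hu'
    -- cut property in Gv at u'
    have hcut' : ∀ S T : Finset sV, Disjoint S T → u' ∉ S → u' ∉ T →
        S.card = a → T.card = b → ∃ s ∈ S, ∃ t ∈ T, Gv.Adj s t := by
      intro S T hST _ _ hSa hTb
      set emb : sV ↪ V := Function.Embedding.subtype _ with hemb
      have h1 : Disjoint (S.map emb) (T.map emb) := (Finset.disjoint_map emb).mpr hST
      have h2 : v ∉ S.map emb := by
        intro hvm
        obtain ⟨w, _, hw⟩ := Finset.mem_map.mp hvm
        exact w.2 hw
      have h3 : v ∉ T.map emb := by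
        intro hvm
        obtain ⟨w, _, hw⟩ := Finset.mem_map.mp hvm
        exact w.2 hw
      obtain ⟨s, hs, t, ht, hst⟩ := hcut (S.map emb) (T.map emb) h1 h2 h3
        (by rw [Finset.card_map, hSa]) (by rw [Finset.card_map, hTb])
      obtain ⟨s0, hs0, rfl⟩ := Finset.mem_map.mp hs
      obtain ⟨t0, ht0, rfl⟩ := Finset.mem_map.mp ht
      refine ⟨s0, hs0, t0, ht0, ?_⟩
      simp only [hGv, comap_adj, Function.Embedding.coe_subtype]
      exact hst
    haveI := hVvne
    have hconn' : Gv.Connected := ⟨hpre⟩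
    obtain ⟨w, p, hp, hlen⟩ := IH (N - 1) (by omega) sV Gv u' hcardVv a b ha hb hcut' hconn'
    -- map back to G and prepend v
    set f := (SimpleGraph.Embedding.induce sV (G := G)).toHom with hf
    have hfinj : Function.Injective f := Subtype.val_injective
    have hpath2 : (p.map f).IsPath := p.map_isPath_of_injective hfinj hp
    have hvnot : v ∉ (p.map f).support := by
      rw [SimpleGraph.Walk.support_map]
      intro hmem
      obtain ⟨z, _, hz⟩ := List.mem_map.mp hmem
      exact z.2 hz
    have hadj' : G.Adj v u := hadj.symm
    refine ⟨(w : V), SimpleGraph.Walk.cons hadj' (p.map f), ?_, ?_⟩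
    · exact (SimpleGraph.Walk.cons_isPath_iff _ _).mpr ⟨hpath2, hvnot⟩
    · exact le_of_le_of_eq (by omega : N + 1 ≤ p.length + 1 + a + b)
        (congrArg (· + 1 + a + b) (SimpleGraph.Walk.length_map f p).symm)
  · -- G - v is disconnected: take a minimum component D₀.
    have hne' : (Finset.univ : Finset sV).Nonempty := Finset.univ_nonempty
    obtain ⟨x₀, _, hmin⟩ := Finset.exists_min_image Finset.univ
      (fun x : sV => (Finset.univ.filter (fun z => Gv.Reachable x z)).card) hne'
    set D₀ : Finset sV := Finset.univ.filter (fun z => Gv.Reachable x₀ z) with hD₀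
    have hmemD₀ : ∀ z : sV, z ∈ D₀ ↔ Gv.Reachable x₀ z := by
      intro z; simp [hD₀]
    have hx₀D : x₀ ∈ D₀ := (hmemD₀ x₀).mpr (Reachable.refl _)
    set d := D₀.card with hd
    have hd1 : 1 ≤ d := Finset.card_pos.mpr ⟨x₀, hx₀D⟩
    have hdN : d ≤ N - 1 := by
      have hle := Finset.card_le_card (Finset.subset_univ D₀)
      rwa [Finset.card_univ, hcardVv] at hle
    -- some vertex not reachable from x₀ (since G - v is disconnected)
    obtain ⟨y, hy⟩ : ∃ y : sV, ¬ Gv.Reachable x₀ y := by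
      by_contra hall
      push_neg at hall
      apply hpre
      intro p q
      exact (hall p).symm.trans (hall q)
    set emb : sV ↪ V := Function.Embedding.subtype _ with hemb
    set D' : Finset V := D₀.map emb with hD'
    have hmemD' : ∀ w : V, w ∈ D' ↔ ∃ (hw : w ≠ v), (⟨w, hw⟩ : sV) ∈ D₀ := by
      intro w
      constructor
      · intro hwD
        obtain ⟨z, hz, rfl⟩ := Finset.mem_map.mp hwD
        exact ⟨z.2, hz⟩
      · rintro ⟨hw, hmem⟩
        exact Finset.mem_map.mpr ⟨⟨w, hw⟩, hmem, rfl⟩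
    have hvD' : v ∉ D' := by
      intro hv
      obtain ⟨hw, _⟩ := (hmemD' v).mp hv
      exact hw rfl
    have hcardD' : D'.card = d := Finset.card_map _
    -- adjacency from a component stays in the component
    have hclosed : ∀ (z w : sV), Gv.Reachable x₀ z → G.Adj (z : V) (w : V) →
        Gv.Reachable x₀ w := by
      intro z w hz hadj
      have hzw : Gv.Adj z w := by
        simp only [hGv, comap_adj, Function.Embedding.coe_subtype]
        exact hadj
      exact hz.trans hzw.reachable
    -- the graph with D₀ deleted
    set s' : Set V := {z | z ∉ D'} with hs'
    have hvs' : v ∈ s' := hvD'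
    set G' : SimpleGraph s' := G.induce s' with hG'
    set v' : s' := ⟨v, hvs'⟩ with hv'
    have hcards' : Fintype.card s' = N - d := by
      have h1 : Fintype.card s' = Fintype.card {z : V // ¬ z ∈ D'} := Fintype.card_congr
        (Equiv.subtypeEquivRight (fun z => Iff.rfl))
      rw [h1, Fintype.card_subtype_compl, hcard]
      congr 1
      rw [Fintype.card_coe]
      exact hcardD'
    -- connectivity of G'
    have hreachv : ∀ z : s', G'.Reachable z v' := by
      intro z
      by_cases hzv : (z : V) = v
      · have hzz : z = v' := Subtype.ext hzv
        rw [hzz]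
      · have hzD : ¬ Gv.Reachable x₀ ⟨(z : V), hzv⟩ := by
          intro hr
          exact z.2 ((hmemD' (z : V)).mpr ⟨hzv, (hmemD₀ _).mpr hr⟩)
        obtain ⟨pw⟩ := hconn (z : V) v
        obtain ⟨u, hu, hadj, hreach⟩ := toward G v pw hzv
        have huD : ¬ Gv.Reachable x₀ ⟨u, hu⟩ := by
          intro hr
          exact hzD (hr.trans hreach.symm)
        obtain ⟨W⟩ := hreach
        have hWsupp : ∀ w ∈ W.support, w ∉ D₀ := by
          intro w hw hwD
          have hr1 : Gv.Reachable ⟨(z : V), hzv⟩ w := ⟨W.takeUntil w hw⟩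
          exact hzD (((hmemD₀ w).mp hwD).trans hr1.symm)
        have hMsupp : ∀ w ∈ (W.map (SimpleGraph.Embedding.induce sV (G := G)).toHom).support,
            w ∈ s' := by
          intro w hw
          rw [SimpleGraph.Walk.support_map] at hw
          obtain ⟨z₂, hz₂, rfl⟩ := List.mem_map.mp hw
          intro hwD'
          obtain ⟨hne, hmem⟩ := (hmemD' _).mp hwD'
          have hz₂D : z₂ ∈ D₀ := by
            have hz2e : z₂ = ⟨(z₂ : V), hne⟩ := Subtype.ext rfl
            rw [hz2e]; exact hmem
          exact hWsupp z₂ hz₂ hz₂D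
        have hus' : (u : V) ∈ s' := by
          intro huD'
          obtain ⟨hne, hmem⟩ := (hmemD' u).mp huD'
          exact huD ((hmemD₀ _).mp hmem)
        have hr1 : G'.Reachable ⟨(z : V), z.2⟩ ⟨u, hus'⟩ :=
          reach_induce G s' (W.map (SimpleGraph.Embedding.induce sV (G := G)).toHom)
            hMsupp z.2 hus'
        have hstep : G'.Adj ⟨u, hus'⟩ v' := by
          simp only [hG', comap_adj, Function.Embedding.coe_subtype]
          exact hadj
        have hz' : z = ⟨(z : V), z.2⟩ := Subtype.ext rfl
        rw [hz']
        exact hr1.trans hstep.reachable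
    haveI : Nonempty s' := ⟨v'⟩
    have hconn' : G'.Connected :=
      ⟨fun p q => (hreachv p).trans (hreachv q).symm⟩
    set emb' : s' ↪ V := Function.Embedding.subtype _ with hemb'
    have hvnotmap : ∀ (U : Finset s'), v' ∉ U → v ∉ U.map emb' := by
      intro U hvU hv
      obtain ⟨z, hz, hzv⟩ := Finset.mem_map.mp hv
      exact hvU (by rwa [show z = v' from Subtype.ext hzv] at hz)
    have hdisjD' : ∀ (U : Finset s'), Disjoint (U.map emb') D' := by
      intro U
      rw [Finset.disjoint_left]
      intro w hw hwD
      obtain ⟨z, _, rfl⟩ := Finset.mem_map.mp hw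
      exact z.2 hwD
    by_cases hda : d < a
    · -- delete D₀, recurse with (a - d, b)
      have hcut' : ∀ S T : Finset s', Disjoint S T → v' ∉ S → v' ∉ T →
          S.card = a - d → T.card = b → ∃ s ∈ S, ∃ t ∈ T, G'.Adj s t := by
        intro S T hST hv'S hv'T hSa hTb
        have hdisj : Disjoint (S.map emb' ∪ D') (T.map emb') := by
          rw [Finset.disjoint_union_left]
          exact ⟨(Finset.disjoint_map emb').mpr hST, (hdisjD' T).symm⟩
        have hvS : v ∉ S.map emb' ∪ D' := by
          rw [Finset.mem_union]
          rintro (hv | hv)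
          · exact hvnotmap S hv'S hv
          · exact hvD' hv
        have hScard : (S.map emb' ∪ D').card = a := by
          rw [Finset.card_union_of_disjoint (hdisjD' S), Finset.card_map, hSa, hcardD']
          omega
        obtain ⟨s, hs, t, ht, hst⟩ := hcut (S.map emb' ∪ D') (T.map emb') hdisj hvS
          (hvnotmap T hv'T) hScard (by rw [Finset.card_map, hTb])
        obtain ⟨t0, ht0, rfl⟩ := Finset.mem_map.mp ht
        rcases Finset.mem_union.mp hs with hs1 | hs2
        · obtain ⟨s0, hs0, rfl⟩ := Finset.mem_map.mp hs1
          refine ⟨s0, hs0, t0, ht0, ?_⟩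
          simp only [hG', comap_adj, Function.Embedding.coe_subtype]
          exact hst
        · -- impossible: an edge from D₀ stays in D₀
          exfalso
          obtain ⟨hsv, hsD⟩ := (hmemD' s).mp hs2
          have htv : (t0 : V) ≠ v := by
            intro hteq
            exact hvnotmap T hv'T (hteq ▸ ht)
          have hrt : Gv.Reachable x₀ ⟨(t0 : V), htv⟩ :=
            hclosed ⟨s, hsv⟩ ⟨(t0 : V), htv⟩ ((hmemD₀ _).mp hsD) hst
          exact t0.2 ((hmemD' _).mpr ⟨htv, (hmemD₀ _).mpr hrt⟩)
      have hab : 1 ≤ a - d := by omega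
      obtain ⟨w, p, hp, hlen⟩ := IH (N - d) (by omega) s' G' v' hcards' (a - d) b hab hb
        hcut' hconn'
      set f := (SimpleGraph.Embedding.induce s' (G := G)).toHom with hf
      have hfinj : Function.Injective f := Subtype.val_injective
      refine ⟨(w : V), p.map f, p.map_isPath_of_injective hfinj hp, ?_⟩
      exact le_of_le_of_eq (by omega : N + 1 ≤ p.length + a + b)
        (congrArg (· + a + b) (SimpleGraph.Walk.length_map f p).symm)
    · by_cases hdb : d < b
      · -- delete D₀, recurse with (a, b - d)
        have hcut' : ∀ S T : Finset s', Disjoint S T → v' ∉ S → v' ∉ T →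
            S.card = a → T.card = b - d → ∃ s ∈ S, ∃ t ∈ T, G'.Adj s t := by
          intro S T hST hv'S hv'T hSa hTb
          have hdisj : Disjoint (S.map emb') (T.map emb' ∪ D') := by
            rw [Finset.disjoint_union_right]
            exact ⟨(Finset.disjoint_map emb').mpr hST, hdisjD' S⟩
          have hvT : v ∉ T.map emb' ∪ D' := by
            rw [Finset.mem_union]
            rintro (hv | hv)
            · exact hvnotmap T hv'T hv
            · exact hvD' hv
          have hTcard : (T.map emb' ∪ D').card = b := by
            rw [Finset.card_union_of_disjoint (hdisjD' T), Finset.card_map, hTb, hcardD']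
            omega
          obtain ⟨s, hs, t, ht, hst⟩ := hcut (S.map emb') (T.map emb' ∪ D') hdisj
            (hvnotmap S hv'S) hvT (by rw [Finset.card_map, hSa]) hTcard
          obtain ⟨s0, hs0, rfl⟩ := Finset.mem_map.mp hs
          rcases Finset.mem_union.mp ht with ht1 | ht2
          · obtain ⟨t0, ht0, rfl⟩ := Finset.mem_map.mp ht1
            refine ⟨s0, hs0, t0, ht0, ?_⟩
            simp only [hG', comap_adj, Function.Embedding.coe_subtype]
            exact hst
          · -- impossible: an edge into D₀ comes from D₀
            exfalso
            obtain ⟨htv, htD⟩ := (hmemD' t).mp ht2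
            have hsv : (s0 : V) ≠ v := by
              intro hseq
              exact hvnotmap S hv'S (hseq ▸ hs)
            have hrs : Gv.Reachable x₀ ⟨(s0 : V), hsv⟩ :=
              hclosed ⟨t, htv⟩ ⟨(s0 : V), hsv⟩ ((hmemD₀ _).mp htD) hst.symm
            exact s0.2 ((hmemD' _).mpr ⟨hsv, (hmemD₀ _).mpr hrs⟩)
        have hab : 1 ≤ b - d := by omega
        obtain ⟨w, p, hp, hlen⟩ := IH (N - d) (by omega) s' G' v' hcards' a (b - d) ha hab
          hcut' hconn'
        set f := (SimpleGraph.Embedding.induce s' (G := G)).toHom with hf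
        have hfinj : Function.Injective f := Subtype.val_injective
        refine ⟨(w : V), p.map f, p.map_isPath_of_injective hfinj hp, ?_⟩
        exact le_of_le_of_eq (by omega : N + 1 ≤ p.length + a + b)
          (congrArg (· + a + b) (SimpleGraph.Walk.length_map f p).symm)
      · -- a ≤ d and b ≤ d : contradiction with the cut property
        exfalso
        push_neg at hda hdb
        set Dy : Finset sV := Finset.univ.filter (fun z => Gv.Reachable y z) with hDy
        have hmemDy : ∀ z : sV, z ∈ Dy ↔ Gv.Reachable y z := by
          intro z; simp [hDy]
        have hdY : d ≤ Dy.card := hmin y (Finset.mem_univ y)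
        obtain ⟨S₀, hS₀sub, hS₀card⟩ :=
          Finset.exists_subset_card_eq (show a ≤ D₀.card from hda)
        obtain ⟨T₀, hT₀sub, hT₀card⟩ :=
          Finset.exists_subset_card_eq (show b ≤ Dy.card from le_trans hdb hdY)
        have hdisj0 : Disjoint D₀ Dy := by
          rw [Finset.disjoint_left]
          intro z hz1 hz2
          exact hy (((hmemD₀ z).mp hz1).trans ((hmemDy z).mp hz2).symm)
        have hdisj : Disjoint (S₀.map emb) (T₀.map emb) := by
          rw [Finset.disjoint_map]
          exact Finset.disjoint_of_subset_left hS₀sub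
            (Finset.disjoint_of_subset_right hT₀sub hdisj0)
        have hvS : v ∉ S₀.map emb := by
          intro hv
          obtain ⟨z, _, hz⟩ := Finset.mem_map.mp hv
          exact z.2 hz
        have hvT : v ∉ T₀.map emb := by
          intro hv
          obtain ⟨z, _, hz⟩ := Finset.mem_map.mp hv
          exact z.2 hz
        obtain ⟨s, hs, t, ht, hst⟩ := hcut (S₀.map emb) (T₀.map emb) hdisj hvS hvT
          (by rw [Finset.card_map, hS₀card]) (by rw [Finset.card_map, hT₀card])
        obtain ⟨s0, hs0, rfl⟩ := Finset.mem_map.mp hs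
        obtain ⟨t0, ht0, rfl⟩ := Finset.mem_map.mp ht
        have hadj : Gv.Adj s0 t0 := by
          simp only [hGv, comap_adj, Function.Embedding.coe_subtype]
          exact hst
        exact hy (((hmemD₀ s0).mp (hS₀sub hs0)).trans
          (hadj.reachable.trans ((hmemDy t0).mp (hT₀sub ht0)).symm))

theorem stmt_1 {V : Type*} [Fintype V] [DecidableEq V] (G : SimpleGraph V)
    (n k : ℕ) (hn : Fintype.card V = n) (hk : 0 < k) (hkn : k < n)
    (hcross : ∀ S T : Finset V, Disjoint S T → S.card = k → T.card = k →
      ∃ s ∈ S, ∃ t ∈ T, G.Adj s t) :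
    ∃ (u v : V) (p : G.Walk u v), p.IsPath ∧ n + 1 ≤ p.length + 2 * k := by
  classical
  have hn2 : 2 ≤ n := by omega
  have hne : Nonempty V := by
    rw [← Fintype.card_pos_iff, hn]; omega
  set Gc := cone G with hGc
  have hconn : Gc.Connected := by
    have hto : ∀ x : Option V, Gc.Reachable x none := by
      intro x
      cases x with
      | none => exact Reachable.refl _
      | some a => exact (cone_adj_none (a := a)).reachable
    exact ⟨fun p q => (hto p).trans (hto q).symm⟩
  have hcut : ∀ S T : Finset (Option V), Disjoint S T → none ∉ S → none ∉ T →
      S.card = k → T.card = k → ∃ s ∈ S, ∃ t ∈ T, Gc.Adj s t := by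
    intro S T hST hnS hnT hSk hTk
    set S₀ : Finset V := Finset.univ.filter (fun z => some z ∈ S) with hS₀
    set T₀ : Finset V := Finset.univ.filter (fun z => some z ∈ T) with hT₀
    have hmapS : S₀.map ⟨some, Option.some_injective V⟩ = S := by
      ext o
      rcases o with _ | a
      · simp only [Finset.mem_map, Function.Embedding.coeFn_mk]
        constructor
        · rintro ⟨z, _, h⟩; cases h
        · intro h; exact absurd h hnS
      · simp [hS₀]
    have hmapT : T₀.map ⟨some, Option.some_injective V⟩ = T := by
      ext o
      rcases o with _ | a
      · simp only [Finset.mem_map, Function.Embedding.coeFn_mk]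
        constructor
        · rintro ⟨z, _, h⟩; cases h
        · intro h; exact absurd h hnT
      · simp [hT₀]
    have hS₀k : S₀.card = k := by
      rw [← hSk, ← hmapS, Finset.card_map]
    have hT₀k : T₀.card = k := by
      rw [← hTk, ← hmapT, Finset.card_map]
    have hdisj : Disjoint S₀ T₀ := by
      rw [Finset.disjoint_left]
      intro z hz1 hz2
      rw [hS₀, Finset.mem_filter] at hz1
      rw [hT₀, Finset.mem_filter] at hz2
      exact (Finset.disjoint_left.mp hST) hz1.2 hz2.2
    obtain ⟨s, hs, t, ht, hst⟩ := hcross S₀ T₀ hdisj hS₀k hT₀k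
    rw [hS₀, Finset.mem_filter] at hs
    rw [hT₀, Finset.mem_filter] at ht
    exact ⟨some s, hs.2, some t, ht.2, hst⟩
  have hcardOpt : Fintype.card (Option V) = n + 1 := by
    rw [Fintype.card_option, hn]
  obtain ⟨w, p, hp, hlen⟩ := core_path (n + 1) (Option V) Gc none hcardOpt k k hk hk
    hcut hconn
  cases p with
  | nil =>
      obtain ⟨v0⟩ := hne
      refine ⟨v0, v0, SimpleGraph.Walk.nil, SimpleGraph.Walk.IsPath.nil, ?_⟩
      simp only [SimpleGraph.Walk.length_nil] at hlen ⊢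
      omega
  | @cons _ m _ h q =>
      rw [SimpleGraph.Walk.cons_isPath_iff] at hp
      obtain ⟨hq, hnone⟩ := hp
      have hqsupp : ∀ z ∈ q.support, z ≠ none := by
        intro z hz hzn
        exact hnone (hzn ▸ hz)
      obtain ⟨a, b, q', hma, hwb, hqlen, hqsup⟩ := walk_down q hqsupp
      have hq'path : q'.IsPath := by
        rw [SimpleGraph.Walk.isPath_def] at hq ⊢
        rw [hqsup] at hq
        exact hq.of_map
      refine ⟨a, b, q', hq'path, ?_⟩
      simp only [SimpleGraph.Walk.length_cons] at hlen
      omega
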